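/- Let f(x) = Σ_{j=1}^{L_f} ω_j^f · φ(x; μ_j^f, α_j^f, β) and g(x) = Σ_{k=1}^{L_g} ω_k^g · φ(x; μ_k^g, α_k^g, β) be finite mixtures of generalized normal densities with a common shape parameter β > 0 and all weights and scales strictly positive. If max_j α_j^f > max_k α_k^g, then f(x)/g(x) → +∞ as x → +∞ and f(x)/g(x) → +∞ as x → −∞. -/
import Mathlib

open Filter Topology

/-- The generalized normal density with location `μ`, scale `α`, and shape `β`. -/
noncomputable def gnpdf (μ α β x : ℝ) : ℝ :=
  β / (2 * α * Real.Gamma (1 / β)) * Real.exp (-((|x - μ| / α) ^ β))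

lemma gnpdf_pos {μ α β x : ℝ} (hα : 0 < α) (hβ : 0 < β) : 0 < gnpdf μ α β x := by
  have hΓ : 0 < Real.Gamma (1 / β) := Real.Gamma_pos_of_pos (by positivity)
  unfold gnpdf
  positivity

/-- Exponent difference tends to -∞. -/
lemma exponent_tendsto_atBot {μ0 α0 μk αk β : ℝ} (hβ : 0 < β) (hαk : 0 < αk)
    (hlt : αk < α0) :
    Tendsto (fun x => (|x - μ0| / α0) ^ β - (|x - μk| / αk) ^ β) atTop atBot := by
  have hα0 : 0 < α0 := hαk.trans hlt
  set s : ℝ := (αk / α0 + 1) / 2 with hs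
  have hr1 : αk / α0 < 1 := (div_lt_one hα0).2 hlt
  have hr0 : 0 < αk / α0 := by positivity
  have hs0 : 0 < s := by positivity
  have hs1 : s < 1 := by rw [hs]; linarith
  have hrs : αk / α0 < s := by rw [hs]; linarith
  have hkey : αk - s * α0 < 0 := by
    have := (div_lt_iff₀ hα0).1 hrs; linarith
  -- the eventual bound point
  have hA : Tendsto (fun x => (x - μk) / αk) atTop atTop :=
    (tendsto_atTop_add_const_right atTop (-μk) tendsto_id).atTop_div_const hαk
  have hApow : Tendsto (fun x => ((x - μk) / αk) ^ β) atTop atTop :=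
    (tendsto_rpow_atTop hβ).comp hA
  have hlim : Tendsto (fun x => (s ^ β - 1) * ((x - μk) / αk) ^ β) atTop atBot := by
    refine Tendsto.const_mul_atTop_of_neg ?_ hApow
    have : s ^ β < 1 := Real.rpow_lt_one hs0.le hs1 hβ
    linarith
  refine tendsto_atBot_mono' atTop ?_ hlim
  have hx1 : ∀ᶠ x in atTop, μ0 ≤ x := eventually_ge_atTop μ0
  have hx2 : ∀ᶠ x in atTop, μk ≤ x := eventually_ge_atTop μk
  have hx3 : ∀ᶠ x in atTop, (αk * μ0 - s * α0 * μk) / (αk - s * α0) ≤ x :=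
    eventually_ge_atTop _
  filter_upwards [hx1, hx2, hx3] with x h1 h2 h3
  have habs0 : |x - μ0| = x - μ0 := abs_of_nonneg (by linarith)
  have habsk : |x - μk| = x - μk := abs_of_nonneg (by linarith)
  rw [habs0, habsk]
  have hb : (x - μ0) / α0 ≤ s * ((x - μk) / αk) := by
    have h4 := (div_le_iff_of_neg hkey).1 h3
    rw [← mul_div_assoc, div_le_div_iff₀ hα0 hαk]
    nlinarith
  have hpow : ((x - μ0) / α0) ^ β ≤ (s * ((x - μk) / αk)) ^ β :=
    Real.rpow_le_rpow (div_nonneg (by linarith) hα0.le) hb hβ.le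
  have hmul : (s * ((x - μk) / αk)) ^ β = s ^ β * ((x - μk) / αk) ^ β :=
    Real.mul_rpow hs0.le (div_nonneg (by linarith) hαk.le)
  calc ((x - μ0) / α0) ^ β - ((x - μk) / αk) ^ β
      ≤ s ^ β * ((x - μk) / αk) ^ β - ((x - μk) / αk) ^ β := by
        rw [← hmul]; linarith
    _ = (s ^ β - 1) * ((x - μk) / αk) ^ β := by ring

/-- Ratio of gnpdfs with smaller scale over larger scale tends to 0 at +∞. -/
lemma gnpdf_ratio_tendsto_zero {μ0 α0 μk αk β : ℝ} (hβ : 0 < β) (hαk : 0 < αk)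
    (hlt : αk < α0) :
    Tendsto (fun x => gnpdf μk αk β x / gnpdf μ0 α0 β x) atTop (𝓝 0) := by
  have hα0 : 0 < α0 := hαk.trans hlt
  have hΓ : 0 < Real.Gamma (1 / β) := Real.Gamma_pos_of_pos (by positivity)
  have heq : ∀ x, gnpdf μk αk β x / gnpdf μ0 α0 β x
      = (β / (2 * αk * Real.Gamma (1 / β))) / (β / (2 * α0 * Real.Gamma (1 / β)))
        * Real.exp ((|x - μ0| / α0) ^ β - (|x - μk| / αk) ^ β) := by
    intro x
    unfold gnpdf
    rw [mul_div_mul_comm, ← Real.exp_sub]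
    ring_nf
  have hexp : Tendsto (fun x => Real.exp ((|x - μ0| / α0) ^ β - (|x - μk| / αk) ^ β))
      atTop (𝓝 0) :=
    Real.tendsto_exp_atBot.comp (exponent_tendsto_atBot hβ hαk hlt)
  have := hexp.const_mul ((β / (2 * αk * Real.Gamma (1 / β)))
      / (β / (2 * α0 * Real.Gamma (1 / β))))
  rw [mul_zero] at this
  simpa only [heq] using this

lemma gnpdf_neg (μ α β x : ℝ) : gnpdf (-μ) α β (-x) = gnpdf μ α β x := by
  unfold gnpdf
  rw [show (-x) - -μ = -(x - μ) by ring, abs_neg]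

/-- Main atTop lemma. -/
lemma mixture_atTop
    (Lf Lg : ℕ) (β : ℝ) (hβ : 0 < β)
    (ωf μf αf : Fin (Lf + 1) → ℝ) (ωg μg αg : Fin (Lg + 1) → ℝ)
    (hωf : ∀ j, 0 < ωf j) (hαf : ∀ j, 0 < αf j)
    (hωg : ∀ k, 0 < ωg k) (hαg : ∀ k, 0 < αg k)
    (hmax : Finset.univ.sup' Finset.univ_nonempty αg
          < Finset.univ.sup' Finset.univ_nonempty αf) :
    Tendsto (fun x => (∑ j, ωf j * gnpdf (μf j) (αf j) β x)
                    / (∑ k, ωg k * gnpdf (μg k) (αg k) β x)) atTop atTop := by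
  obtain ⟨j0, -, hj0⟩ := Finset.exists_mem_eq_sup' (Finset.univ_nonempty) αf
  rw [hj0] at hmax
  have hlt : ∀ k, αg k < αf j0 := fun k =>
    lt_of_le_of_lt (Finset.le_sup' αg (Finset.mem_univ k)) hmax
  -- g / (ωf j0 * φ0) → 0
  have hratio : Tendsto (fun x => (∑ k, ωg k * gnpdf (μg k) (αg k) β x)
      / (ωf j0 * gnpdf (μf j0) (αf j0) β x)) atTop (𝓝 0) := by
    have : ∀ x, (∑ k, ωg k * gnpdf (μg k) (αg k) β x)
        / (ωf j0 * gnpdf (μf j0) (αf j0) β x)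
        = ∑ k, (ωg k / ωf j0) * (gnpdf (μg k) (αg k) β x / gnpdf (μf j0) (αf j0) β x) := by
      intro x
      rw [Finset.sum_div]
      refine Finset.sum_congr rfl fun k _ => ?_
      have h1 : gnpdf (μf j0) (αf j0) β x ≠ 0 := (gnpdf_pos (hαf j0) hβ).ne'
      have h2 : ωf j0 ≠ 0 := (hωf j0).ne'
      field_simp
    simp only [this]
    have hsum : Tendsto (fun x => ∑ k : Fin (Lg + 1),
        (ωg k / ωf j0) * (gnpdf (μg k) (αg k) β x / gnpdf (μf j0) (αf j0) β x))
        atTop (𝓝 (∑ _k : Fin (Lg + 1), (0 : ℝ))) :=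
      tendsto_finset_sum _ (fun k _ => by
        have h := (gnpdf_ratio_tendsto_zero (μ0 := μf j0) (μk := μg k) hβ (hαg k) (hlt k)).const_mul (ωg k / ωf j0)
        rwa [mul_zero] at h)
    simpa using hsum
  have hposg : ∀ x, 0 < ∑ k, ωg k * gnpdf (μg k) (αg k) β x := fun x =>
    Finset.sum_pos (fun k _ => mul_pos (hωg k) (gnpdf_pos (hαg k) hβ)) Finset.univ_nonempty
  have hpos0 : ∀ x, 0 < ωf j0 * gnpdf (μf j0) (αf j0) β x := fun x =>
    mul_pos (hωf j0) (gnpdf_pos (hαf j0) hβ)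
  have hinv : Tendsto (fun x => (ωf j0 * gnpdf (μf j0) (αf j0) β x)
      / (∑ k, ωg k * gnpdf (μg k) (αg k) β x)) atTop atTop := by
    have h0 : Tendsto (fun x => (∑ k, ωg k * gnpdf (μg k) (αg k) β x)
        / (ωf j0 * gnpdf (μf j0) (αf j0) β x)) atTop (𝓝[>] 0) := by
      rw [tendsto_nhdsWithin_iff]
      exact ⟨hratio, Eventually.of_forall fun x =>
        div_pos (hposg x) (hpos0 x)⟩
    have := h0.inv_tendsto_nhdsGT_zero
    refine this.congr fun x => ?_
    simp [Pi.inv_apply, inv_div]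
  refine tendsto_atTop_mono' atTop ?_ hinv
  filter_upwards with x
  have hle : ωf j0 * gnpdf (μf j0) (αf j0) β x ≤ ∑ j, ωf j * gnpdf (μf j) (αf j) β x :=
    Finset.single_le_sum (fun j _ => (mul_pos (hωf j) (gnpdf_pos (hαf j) hβ)).le)
      (Finset.mem_univ j0)
  exact (div_le_div_iff_of_pos_right (hposg x)).2 hle

/-- For finite mixtures `f` and `g` of generalized normal densities with
a common shape parameter `β > 0` and strictly positive weights and scales (weights
summing to 1), if the maximal scale of `f` exceeds that of `g`, then `f/g → +∞` in
both tails. -/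
theorem mixture_ratio_tendsto_atTop_of_max_scale_gt
    (Lf Lg : ℕ) (β : ℝ) (hβ : 0 < β)
    (ωf μf αf : Fin (Lf + 1) → ℝ) (ωg μg αg : Fin (Lg + 1) → ℝ)
    (hωf : ∀ j, 0 < ωf j) (hαf : ∀ j, 0 < αf j)
    (hωg : ∀ k, 0 < ωg k) (hαg : ∀ k, 0 < αg k)
    (hsumf : ∑ j, ωf j = 1) (hsumg : ∑ k, ωg k = 1)
    (hmax : Finset.univ.sup' Finset.univ_nonempty αg
          < Finset.univ.sup' Finset.univ_nonempty αf) :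
    Tendsto (fun x => (∑ j, ωf j * gnpdf (μf j) (αf j) β x)
                    / (∑ k, ωg k * gnpdf (μg k) (αg k) β x)) atTop atTop ∧
    Tendsto (fun x => (∑ j, ωf j * gnpdf (μf j) (αf j) β x)
                    / (∑ k, ωg k * gnpdf (μg k) (αg k) β x)) atBot atTop := by
  constructor
  · exact mixture_atTop Lf Lg β hβ ωf μf αf ωg μg αg hωf hαf hωg hαg hmax
  · have h := mixture_atTop Lf Lg β hβ ωf (fun j => -μf j) αf ωg (fun k => -μg k) αg
      hωf hαf hωg hαg hmax
    have := h.comp tendsto_neg_atBot_atTop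
    refine this.congr fun x => ?_
    simp only [Function.comp_apply]
    congr 1 <;> refine Finset.sum_congr rfl fun i _ => ?_ <;>
      rw [gnpdf_neg]
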